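/- (Theorem 1, upper bound form.) Assume no two ghost positions are consecutive, i.e. ι k + 1 < ι (k+1) for all k with k + 1 ≤ m − 1. Then for every v : ℝ and every w : ℕ → ℝ there exists a multivariate polynomial p : MvPolynomial (Fin (n+m)) ℝ with total degree at most 2*m + 1 such that for every choice of input bits b : ℕ → ℤ with b k ∈ {0,1} for all k and every c implementing the m-plus-bits interface for b, one has v + ∑_{i=1}^{n} w i * (φ* i : ℝ) = MvPolynomial.eval (fun t : Fin (n+m) => ((φ (t + 1)) : ℝ)) p. (That is, the argument of the sign function in the APUF response model is, as a function of the observable feature vector (φ(1),...,φ(n+m)), given by a polynomial of order at most 2m+1.) -/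

import Mathlib

/-- `c` implements the `m`-plus-bits challenge interface for input bits `b`,
with ghost-bit positions `ι 0 < ι 1 < ... < ι (m-1)`, for an `n`-stage PUF. -/
def MPlusBitsInterface (n m : ℕ) (hm : 1 ≤ m) (ι : Fin m → ℕ)
    (b c : ℕ → ℤ) : Prop :=
  (∀ i, 1 ≤ i → i < ι ⟨0, hm⟩ → c i = b i) ∧
  (∀ k (hk : k + 1 ≤ m - 1), ∀ i,
    ι ⟨k, by omega⟩ < i → i < ι ⟨k + 1, by omega⟩ → c (i - (k + 1)) = b i) ∧
  (∀ i, ι ⟨m - 1, by omega⟩ < i → i ≤ n + m → c (i - m) = b i)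

namespace Stmt6Aux

open Finset

variable {m : ℕ} {ι : Fin m → ℕ}

/-- number of ghost segments "at or before" compressed position `j` -/
def dd (ι : Fin m → ℕ) (j : ℕ) : ℕ :=
  ((Finset.univ : Finset (Fin m)).filter (fun k => ι k ≤ j + k)).card

/-- compressed position `j` corresponds to original position `ff ι j` -/
def ff (ι : Fin m → ℕ) (j : ℕ) : ℕ := j + dd ι j

lemma dd_le (j : ℕ) : dd ι j ≤ m := by
  classical
  calc dd ι j ≤ (Finset.univ : Finset (Fin m)).card := Finset.card_filter_le _ _
  _ = m := by simp

lemma shift (hmono : StrictMono ι) (a b : Fin m) (h : (a : ℕ) ≤ b) :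
    ι a + ((b : ℕ) - (a : ℕ)) ≤ ι b := by
  obtain ⟨j, hj⟩ := Nat.exists_eq_add_of_le h
  induction j generalizing b with
  | zero =>
      have : a = b := Fin.ext (by omega)
      subst this; simp
  | succ j ih =>
      have hb : (a : ℕ) + j < m := by omega
      have h2 := ih ⟨(a : ℕ) + j, hb⟩ (by simp) (by simp)
      have hlt : (⟨(a : ℕ) + j, hb⟩ : Fin m) < b := by
        rw [Fin.lt_def]; simp; omega
      have := hmono hlt
      simp at h2 ⊢
      omega

lemma mem_dd (hmono : StrictMono ι) (j : ℕ) (k : Fin m) :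
    ι k ≤ j + k ↔ (k : ℕ) < dd ι j := by
  classical
  constructor
  · intro hk
    have hsub : Finset.Iic k ⊆
        (Finset.univ : Finset (Fin m)).filter (fun k' => ι k' ≤ j + k') := by
      intro k' hk'
      simp only [Finset.mem_Iic] at hk'
      simp only [Finset.mem_filter, Finset.mem_univ, true_and]
      have := shift hmono k' k hk'
      omega
    have := Finset.card_le_card hsub
    rw [Fin.card_Iic] at this
    unfold dd
    omega
  · intro hk
    by_contra hcon
    have hsub : (Finset.univ : Finset (Fin m)).filter (fun k' => ι k' ≤ j + k')
        ⊆ Finset.Iio k := by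
      intro k' hk'
      simp only [Finset.mem_filter, Finset.mem_univ, true_and] at hk'
      simp only [Finset.mem_Iio]
      by_contra hge
      push_neg at hge
      have := shift hmono k k' (by exact_mod_cast hge)
      omega
    have := Finset.card_le_card hsub
    rw [Fin.card_Iio] at this
    unfold dd at hk
    omega

lemma dd_mono : Monotone (dd ι) := by
  classical
  intro j j' hj
  apply Finset.card_le_card
  apply Finset.monotone_filter_right
  intro k hk
  omega

lemma ff_strictMono : StrictMono (ff ι) := by
  intro j j' hj
  have := dd_mono (ι := ι) (Nat.le_of_lt hj)
  unfold ff
  omega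

/-- `ff ι j` never hits a ghost position. -/
lemma ff_ne_ghost (hmono : StrictMono ι) (j : ℕ) (k : Fin m) : ff ι j ≠ ι k := by
  rcases lt_or_ge (k : ℕ) (dd ι j) with h | h
  · have := (mem_dd hmono j k).mpr h
    unfold ff; omega
  · have := (mem_dd hmono j k).not.mpr (by omega)
    unfold ff; omega

/-- ghost positions at or beyond `ff ι j` are exactly those with `dd ι j ≤ k`. -/
lemma ghost_ge_iff (hmono : StrictMono ι) (j : ℕ) (k : Fin m) :
    ff ι j ≤ ι k ↔ dd ι j ≤ (k : ℕ) := by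
  constructor
  · intro h
    by_contra hlt
    push_neg at hlt
    have := (mem_dd hmono j k).mpr hlt
    unfold ff at h; omega
  · intro h
    have := (mem_dd hmono j k).not.mpr (by omega)
    unfold ff; omega

/-- extended feature variables: `XX n m a` is `X (a-1)` for `1 ≤ a ≤ n+m`, else `1`. -/
noncomputable def XX (n m : ℕ) (a : ℕ) : MvPolynomial (Fin (n + m)) ℝ :=
  if h : 1 ≤ a ∧ a ≤ n + m then MvPolynomial.X ⟨a - 1, by omega⟩ else 1

/-- ghost indices at or beyond the image of compressed position `j`. -/
noncomputable def GG (ι : Fin m → ℕ) (j : ℕ) : Finset (Fin m) :=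
  (Finset.univ : Finset (Fin m)).filter (fun k => ff ι j ≤ ι k)

/-- the monomial representing the hidden feature `φ* j`. -/
noncomputable def Mon (n m : ℕ) (ι : Fin m → ℕ) (j : ℕ) : MvPolynomial (Fin (n + m)) ℝ :=
  XX n m (ff ι j) * ∏ k ∈ GG ι j, (XX n m (ι k) * XX n m (ι k + 1))

lemma XX_deg (n m a : ℕ) : (XX n m a).totalDegree ≤ 1 := by
  unfold XX
  split_ifs
  · exact le_of_eq (MvPolynomial.totalDegree_X _)
  · simp [MvPolynomial.totalDegree_one]

lemma Mon_deg (n m : ℕ) (ι : Fin m → ℕ) (j : ℕ) :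
    (Mon n m ι j).totalDegree ≤ 2 * m + 1 := by
  unfold Mon
  calc (XX n m (ff ι j) * ∏ k ∈ GG ι j, (XX n m (ι k) * XX n m (ι k + 1))).totalDegree
      ≤ (XX n m (ff ι j)).totalDegree
        + (∏ k ∈ GG ι j, (XX n m (ι k) * XX n m (ι k + 1))).totalDegree :=
        MvPolynomial.totalDegree_mul _ _
    _ ≤ 1 + ∑ k ∈ GG ι j, (XX n m (ι k) * XX n m (ι k + 1)).totalDegree := by
        gcongr
        · exact XX_deg n m _
        · exact MvPolynomial.totalDegree_finset_prod _ _
    _ ≤ 1 + ∑ k ∈ GG ι j, 2 := by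
        gcongr with k hk
        calc (XX n m (ι k) * XX n m (ι k + 1)).totalDegree
            ≤ (XX n m (ι k)).totalDegree + (XX n m (ι k + 1)).totalDegree :=
              MvPolynomial.totalDegree_mul _ _
          _ ≤ 2 := by have := XX_deg n m (ι k); have := XX_deg n m (ι k + 1); omega
    _ ≤ 1 + 2 * m := by
        rw [Finset.sum_const, smul_eq_mul]
        have : (GG ι j).card ≤ m := by
          calc (GG ι j).card ≤ (Finset.univ : Finset (Fin m)).card :=
            Finset.card_filter_le _ _
          _ = m := by simp
        omega
    _ = 2 * m + 1 := by omega

/-- the observable feature vector as an evaluation point -/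
def pt (n m : ℕ) (b : ℕ → ℤ) : Fin (n + m) → ℝ :=
  fun t => ((∏ k ∈ Finset.Icc ((t : ℕ) + 1) (n + m), (2 * b k - 1) : ℤ) : ℝ)

/-- extended observable features -/
def Phi (n m : ℕ) (b : ℕ → ℤ) (a : ℕ) : ℝ :=
  ((∏ k ∈ Finset.Icc a (n + m), (2 * b k - 1) : ℤ) : ℝ)

variable {b : ℕ → ℤ}

lemma prod_pm_sq (hb01 : ∀ k, b k = 0 ∨ b k = 1) {α : Type*} (t : Finset α) (g : α → ℕ) :
    (∏ a ∈ t, (2 * b (g a) - 1)) * (∏ a ∈ t, (2 * b (g a) - 1)) = (1 : ℤ) := by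
  rw [← Finset.prod_mul_distrib]
  rw [Finset.prod_congr rfl (fun a _ => ?_), Finset.prod_const_one]
  rcases hb01 (g a) with h | h <;> rw [h] <;> ring

lemma Phi_sq (hb01 : ∀ k, b k = 0 ∨ b k = 1) (n m a : ℕ) :
    Phi n m b a * Phi n m b a = 1 := by
  unfold Phi
  rw [← Int.cast_mul, prod_pm_sq hb01 (Finset.Icc a (n+m)) (fun x => x), Int.cast_one]

lemma prodZ_step (n m : ℕ) (b : ℕ → ℤ) (a : ℕ) (ha : a ≤ n + m) :
    (∏ k ∈ Finset.Icc a (n + m), (2 * b k - 1))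
      = (2 * b a - 1) * ∏ k ∈ Finset.Icc (a + 1) (n + m), (2 * b k - 1) := by
  have h1 : Finset.Icc a (n + m) = insert a (Finset.Icc (a + 1) (n + m)) := by
    rw [Finset.Icc_add_one_left_eq_Ioc, Finset.Ioc_insert_left ha]
  rw [h1, Finset.prod_insert (by simp)]

lemma s_eq_Phi (hb01 : ∀ k, b k = 0 ∨ b k = 1) (n m a : ℕ) (ha : a ≤ n + m) :
    ((2 * b a - 1 : ℤ) : ℝ) = Phi n m b a * Phi n m b (a + 1) := by
  have h1 : Phi n m b a = ((2 * b a - 1 : ℤ) : ℝ) * Phi n m b (a + 1) := by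
    unfold Phi
    rw [prodZ_step n m b a ha]
    push_cast
    ring
  rw [h1, mul_assoc, Phi_sq hb01, mul_one]

lemma XX_eval (n m a : ℕ) (ha : 1 ≤ a) :
    MvPolynomial.eval (pt n m b) (XX n m a) = Phi n m b a := by
  unfold XX
  split_ifs with h
  · rw [MvPolynomial.eval_X]
    unfold pt Phi
    have : a - 1 + 1 = a := by omega
    rw [this]
  · rw [map_one]
    unfold Phi
    rw [Finset.Icc_eq_empty (by omega), Finset.prod_empty, Int.cast_one]

variable {n : ℕ} {c : ℕ → ℤ}

/-- on `[1, n]`, the interfaced bits are the original bits along `ff`. -/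
lemma c_eq_b (hm : 1 ≤ m) (hmono : StrictMono ι)
    (hic : MPlusBitsInterface n m hm ι b c)
    (j : ℕ) (hj1 : 1 ≤ j) (hjn : j ≤ n) : c j = b (ff ι j) := by
  obtain ⟨h1, h2, h3⟩ := hic
  have hdle : dd ι j ≤ m := dd_le j
  rcases Nat.eq_zero_or_pos (dd ι j) with h0 | hpos
  · -- below the first ghost
    have hk0 : ¬ (ι ⟨0, hm⟩ ≤ j + ((⟨0, hm⟩ : Fin m) : ℕ)) :=
      (mem_dd hmono j ⟨0, hm⟩).not.mpr (by omega)
    simp only [Fin.val_mk, Nat.add_zero] at hk0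
    have := h1 j hj1 (by omega)
    unfold ff
    rw [h0]
    simpa using this
  · rcases eq_or_lt_of_le hdle with hdm | hdm
    · -- beyond the last ghost
      have hk : ι ⟨m - 1, by omega⟩ ≤ j + ((⟨m - 1, by omega⟩ : Fin m) : ℕ) :=
        (mem_dd hmono j ⟨m - 1, by omega⟩).mpr (by simp; omega)
      simp only [Fin.val_mk] at hk
      have := h3 (j + m) (by omega) (by omega)
      unfold ff
      rw [hdm]
      simpa using this
    · -- strictly between two ghosts
      set d := dd ι j with hd
      have hk1 : ι ⟨d - 1, by omega⟩ ≤ j + ((⟨d - 1, by omega⟩ : Fin m) : ℕ) :=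
        (mem_dd hmono j ⟨d - 1, by omega⟩).mpr (by simp; omega)
      have hk2 : ¬ (ι ⟨d, by omega⟩ ≤ j + ((⟨d, by omega⟩ : Fin m) : ℕ)) :=
        (mem_dd hmono j ⟨d, by omega⟩).not.mpr (by simp; omega)
      simp only [Fin.val_mk] at hk1 hk2
      have hfin : (⟨d - 1 + 1, by omega⟩ : Fin m) = ⟨d, by omega⟩ := Fin.ext (by simp; omega)
      have := h2 (d - 1) (by omega) (j + d) (by omega) (by rw [hfin]; omega)
      have harith : j + d - (d - 1 + 1) = j := by omega
      rw [harith] at this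
      unfold ff
      rw [← hd]
      exact this

/-- core product identity -/
lemma key_prod (hm : 1 ≤ m) (hmono : StrictMono ι)
    (hlast : ι ⟨m - 1, by omega⟩ ≤ n + m)
    (hb01 : ∀ k, b k = 0 ∨ b k = 1)
    (hic : MPlusBitsInterface n m hm ι b c)
    (j : ℕ) (hj1 : 1 ≤ j) (hjn : j ≤ n) :
    (∏ k ∈ Finset.Icc j n, (2 * c k - 1))
      = (∏ a ∈ Finset.Icc (ff ι j) (n + m), (2 * b a - 1))
        * ∏ k ∈ GG ι j, (2 * b (ι k) - 1) := by
  classical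
  have hι_le : ∀ k : Fin m, ι k ≤ n + m := by
    intro k
    have : k ≤ (⟨m - 1, by omega⟩ : Fin m) := by
      rw [Fin.le_def]; simp; omega
    exact le_trans (hmono.monotone this) hlast
  -- step 1/2: rewrite as product over the image of ff
  have step1 : (∏ k ∈ Finset.Icc j n, (2 * c k - 1))
      = ∏ a ∈ (Finset.Icc j n).image (ff ι), (2 * b a - 1) := by
    rw [Finset.prod_image (fun x _ y _ h => ff_strictMono.injective h)]
    apply Finset.prod_congr rfl
    intro k hk
    rw [Finset.mem_Icc] at hk
    rw [c_eq_b hm hmono hic k (by omega) (by omega)]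
  -- image characterization
  have hsubG : (GG ι j).image ι ⊆ Finset.Icc (ff ι j) (n + m) := by
    intro a ha
    rw [Finset.mem_image] at ha
    obtain ⟨k, hk, rfl⟩ := ha
    rw [GG, Finset.mem_filter] at hk
    rw [Finset.mem_Icc]
    exact ⟨hk.2, hι_le k⟩
  have himg : (Finset.Icc j n).image (ff ι)
      = Finset.Icc (ff ι j) (n + m) \ (GG ι j).image ι := by
    apply Finset.eq_of_subset_of_card_le
    · intro a ha
      rw [Finset.mem_image] at ha
      obtain ⟨k, hk, rfl⟩ := ha
      rw [Finset.mem_Icc] at hk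
      rw [Finset.mem_sdiff, Finset.mem_Icc]
      refine ⟨⟨ff_strictMono.monotone hk.1, ?_⟩, ?_⟩
      · have := dd_le (ι := ι) k
        unfold ff
        omega
      · rw [Finset.mem_image]
        rintro ⟨k', _, hk'⟩
        exact ff_ne_ghost hmono k k' hk'.symm
    · -- cardinalities
      have hcardimg : ((Finset.Icc j n).image (ff ι)).card = n + 1 - j := by
        rw [Finset.card_image_of_injective _ ff_strictMono.injective, Nat.card_Icc]
      have hcardG : (GG ι j).card = m - dd ι j := by
        have hcompl := Finset.card_filter_add_card_filter_not
          (s := (Finset.univ : Finset (Fin m))) (p := fun k => ι k ≤ j + (k : ℕ))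
        have heq : (Finset.univ : Finset (Fin m)).filter (fun k => ¬ (ι k ≤ j + (k : ℕ)))
            = GG ι j := by
          apply Finset.filter_congr
          intro k _
          rw [ghost_ge_iff hmono j k, mem_dd hmono j k]
          omega
        rw [heq] at hcompl
        have : ((Finset.univ : Finset (Fin m)).filter (fun k => ι k ≤ j + (k : ℕ))).card
            = dd ι j := rfl
        simp only [Finset.card_univ, Fintype.card_fin] at hcompl
        omega
      have hcardsd : (Finset.Icc (ff ι j) (n + m) \ (GG ι j).image ι).card
          = n + 1 - j := by
        rw [Finset.card_sdiff_of_subset hsubG, Nat.card_Icc,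
          Finset.card_image_of_injective _ hmono.injective, hcardG]
        have h1 := dd_le (ι := ι) j
        unfold ff
        omega
      rw [hcardimg, hcardsd]
  -- step 3: peel off the ghosts
  have hsq : (∏ a ∈ (GG ι j).image ι, (2 * b a - 1))
      * (∏ a ∈ (GG ι j).image ι, (2 * b a - 1)) = 1 :=
    prod_pm_sq hb01 _ (fun x => x)
  have hsd := Finset.prod_sdiff (f := fun a => 2 * b a - 1) hsubG
  have step3 : (∏ a ∈ Finset.Icc (ff ι j) (n + m) \ (GG ι j).image ι, (2 * b a - 1))
      = (∏ a ∈ Finset.Icc (ff ι j) (n + m), (2 * b a - 1))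
        * ∏ a ∈ (GG ι j).image ι, (2 * b a - 1) := by
    calc (∏ a ∈ Finset.Icc (ff ι j) (n + m) \ (GG ι j).image ι, (2 * b a - 1))
        = (∏ a ∈ Finset.Icc (ff ι j) (n + m) \ (GG ι j).image ι, (2 * b a - 1))
          * ((∏ a ∈ (GG ι j).image ι, (2 * b a - 1))
            * (∏ a ∈ (GG ι j).image ι, (2 * b a - 1))) := by rw [hsq, mul_one]
      _ = ((∏ a ∈ Finset.Icc (ff ι j) (n + m) \ (GG ι j).image ι, (2 * b a - 1))
            * (∏ a ∈ (GG ι j).image ι, (2 * b a - 1)))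
          * (∏ a ∈ (GG ι j).image ι, (2 * b a - 1)) := by ring
      _ = (∏ a ∈ Finset.Icc (ff ι j) (n + m), (2 * b a - 1))
          * ∏ a ∈ (GG ι j).image ι, (2 * b a - 1) := by rw [hsd]
  have step4 : (∏ a ∈ (GG ι j).image ι, (2 * b a - 1))
      = ∏ k ∈ GG ι j, (2 * b (ι k) - 1) :=
    Finset.prod_image (fun x _ y _ h => hmono.injective h)
  rw [step1, himg, step3, step4]

end Stmt6Aux

/-- Theorem 1, upper bound form: if no two ghost positions are
consecutive, the argument of the sign function in the APUF response model is,
as a function of the observable feature vector `(φ(1), ..., φ(n+m))`, given by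
a multivariate polynomial of total degree at most `2m + 1`. -/
theorem stmt6 (n m : ℕ) (hn : 1 ≤ n) (hm : 1 ≤ m)
    (ι : Fin m → ℕ) (hmono : StrictMono ι)
    (hfirst : 1 ≤ ι ⟨0, hm⟩) (hlast : ι ⟨m - 1, by omega⟩ ≤ n + m)
    (hnc : ∀ k (hk : k + 1 ≤ m - 1), ι ⟨k, by omega⟩ + 1 < ι ⟨k + 1, by omega⟩) :
    ∀ (v : ℝ) (w : ℕ → ℝ),
      ∃ p : MvPolynomial (Fin (n + m)) ℝ,
        p.totalDegree ≤ 2 * m + 1 ∧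
        ∀ (b c : ℕ → ℤ), (∀ k, b k = 0 ∨ b k = 1) →
          MPlusBitsInterface n m hm ι b c →
          v + ∑ i ∈ Finset.Icc 1 n,
              w i * ((∏ k ∈ Finset.Icc i n, (2 * c k - 1) : ℤ) : ℝ)
            = MvPolynomial.eval
                (fun t : Fin (n + m) =>
                  ((∏ k ∈ Finset.Icc ((t : ℕ) + 1) (n + m), (2 * b k - 1) : ℤ) : ℝ))
                p := by
  classical
  open Stmt6Aux in
  intro v w
  refine ⟨MvPolynomial.C v + ∑ j ∈ Finset.Icc 1 n, MvPolynomial.C (w j) * Mon n m ι j,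
    ?_, ?_⟩
  · -- degree bound
    refine le_trans (MvPolynomial.totalDegree_add _ _) (max_le ?_ ?_)
    · simp [MvPolynomial.totalDegree_C]
    · refine le_trans (MvPolynomial.totalDegree_finset_sum _ _) (Finset.sup_le ?_)
      intro j _
      refine le_trans (MvPolynomial.totalDegree_mul _ _) ?_
      rw [MvPolynomial.totalDegree_C, zero_add]
      exact Mon_deg n m ι j
  · intro b c hb01 hic
    have hι_ge : ∀ k : Fin m, 1 ≤ ι k := by
      intro k
      have : (⟨0, hm⟩ : Fin m) ≤ k := by rw [Fin.le_def]; simp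
      exact le_trans hfirst (hmono.monotone this)
    have hι_le : ∀ k : Fin m, ι k ≤ n + m := by
      intro k
      have : k ≤ (⟨m - 1, by omega⟩ : Fin m) := by rw [Fin.le_def]; simp; omega
      exact le_trans (hmono.monotone this) hlast
    show _ = MvPolynomial.eval (pt n m b) _
    rw [map_add, map_sum, MvPolynomial.eval_C]
    congr 1
    apply Finset.sum_congr rfl
    intro j hj
    rw [Finset.mem_Icc] at hj
    rw [map_mul, MvPolynomial.eval_C]
    congr 1
    rw [key_prod hm hmono hlast hb01 hic j hj.1 hj.2]
    -- evaluate the monomial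
    rw [Mon, map_mul, map_prod]
    rw [XX_eval n m (ff ι j) (by unfold ff; omega)]
    have hprod : ∀ k ∈ GG ι j,
        MvPolynomial.eval (pt n m b) (XX n m (ι k) * XX n m (ι k + 1))
          = ((2 * b (ι k) - 1 : ℤ) : ℝ) := by
      intro k _
      rw [map_mul, XX_eval n m (ι k) (hι_ge k), XX_eval n m (ι k + 1) (by omega),
        s_eq_Phi hb01 n m (ι k) (hι_le k)]
    rw [Finset.prod_congr rfl hprod]
    unfold Phi
    push_cast
    ring
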